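/- Let f : O → O be a bijection with lifted map F, let π be a policy assigning to each HL state a set of applicable ground actions, and define the pushforward policy F_*π by (F_*π)(F(s)) = {F(a) : a ∈ π(s)}. Then for every horizon m ∈ ℕ: π solves the problem (s₀, G) within m steps (meaning every π-execution from s₀ — every sequence s₀, s₁, …, s_m with s_{t+1} ∈ succ(s_t, a_t) for some a_t ∈ π(s_t) whenever G ⊄ s_t — reaches a state containing G within m steps) if and only if F_*π solves (F(s₀), F(G)) within m steps. -/

import Mathlib

/-!
STATEMENT 5: Let f : O → O be a bijection with lifted map F, π a policy
assigning to each HL state a set of applicable ground actions, and F_*π the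
pushforward policy with (F_*π)(F(s)) = {F(a) : a ∈ π(s)}. Then for every
horizon m: π solves (s₀, G) within m steps iff F_*π solves (F(s₀), F(G))
within m steps.
-/

namespace Bison

/-- A fact is a predicate symbol together with a list of objects of the
predicate's arity. -/
def HLFact (P O : Type*) (ar : P → ℕ) : Type _ := (p : P) × (Fin (ar p) → O)

/-- An HL state is a set of facts. -/
abbrev HLState (P O : Type*) (ar : P → ℕ) := Set (HLFact P O ar)

variable {P O : Type*} {ar : P → ℕ}

/-- The lifted map of a bijection `f : O ≃ O` on facts. -/
def liftFact (f : O ≃ O) (φ : HLFact P O ar) : HLFact P O ar :=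
  ⟨φ.1, fun i => f (φ.2 i)⟩

/-- The lifted map of a bijection `f : O ≃ O` on states. -/
def liftState (f : O ≃ O) (s : HLState P O ar) : HLState P O ar :=
  liftFact f '' s

/-- A ground action: a precondition and finitely many nondeterministic
outcomes, each with add and delete effects. -/
structure GroundAction (P O : Type*) (ar : P → ℕ) where
  pre : Set (HLFact P O ar)
  n : ℕ
  add : Fin n → Set (HLFact P O ar)
  del : Fin n → Set (HLFact P O ar)

/-- `a` is applicable in `s` if `pre(a) ⊆ s`. -/
def Applicable (a : GroundAction P O ar) (s : HLState P O ar) : Prop :=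
  a.pre ⊆ s

/-- The successor states: `succ(s, a) = {(s \ del_i(a)) ∪ add_i(a) : i}`. -/
def succs (s : HLState P O ar) (a : GroundAction P O ar) :
    Set (HLState P O ar) :=
  { t | ∃ i : Fin a.n, t = (s \ a.del i) ∪ a.add i }

/-- The lifted map of a bijection `f : O ≃ O` on ground actions. -/
def liftAction (f : O ≃ O) (a : GroundAction P O ar) : GroundAction P O ar where
  pre := liftState f a.pre
  n := a.n
  add := fun i => liftState f (a.add i)
  del := fun i => liftState f (a.del i)

/-- A policy assigns a set of ground actions to each HL state. -/
abbrev Policy (P O : Type*) (ar : P → ℕ) :=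
  HLState P O ar → Set (GroundAction P O ar)

/-- `π` solves the problem `(s₀, G)` within `m` steps: every π-execution from
`s₀` — every sequence `s₀, s₁, …, s_m` with `s_{t+1} ∈ succ(s_t, a_t)` for
some `a_t ∈ π(s_t)` whenever `G ⊄ s_t` — reaches a state containing `G`
within `m` steps. -/
def SolvesWithin (π : Policy P O ar) (s₀ G : HLState P O ar) (m : ℕ) : Prop :=
  ∀ s : ℕ → HLState P O ar, s 0 = s₀ →
    (∀ t, t < m → ¬ G ⊆ s t → ∃ a ∈ π (s t), s (t + 1) ∈ succs (s t) a) →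
    ∃ t ≤ m, G ⊆ s t

lemma liftFact_symm_comp (f : O ≃ O) (φ : HLFact P O ar) :
    liftFact f.symm (liftFact f φ) = φ := by
  cases φ; simp [liftFact]; rfl

lemma liftState_symm (f : O ≃ O) (s : HLState P O ar) :
    liftState f.symm (liftState f s) = s := by
  simp only [liftState, Set.image_image, liftFact_symm_comp, Set.image_id']

lemma liftState_symm' (f : O ≃ O) (s : HLState P O ar) :
    liftState f (liftState f.symm s) = s := by
  have := liftState_symm f.symm s; simpa using this

lemma liftFact_injective (f : O ≃ O) :
    Function.Injective (liftFact f : HLFact P O ar → _) :=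
  Function.LeftInverse.injective (liftFact_symm_comp f)

lemma liftState_subset_iff (f : O ≃ O) (s t : HLState P O ar) :
    liftState f s ⊆ liftState f t ↔ s ⊆ t :=
  Set.image_subset_image_iff (liftFact_injective f)

lemma liftState_union (f : O ≃ O) (s t : HLState P O ar) :
    liftState f (s ∪ t) = liftState f s ∪ liftState f t :=
  Set.image_union _ _ _

lemma liftState_diff (f : O ≃ O) (s t : HLState P O ar) :
    liftState f (s \ t) = liftState f s \ liftState f t :=
  Set.image_diff (liftFact_injective f) _ _

lemma liftAction_symm_comp (f : O ≃ O) (a : GroundAction P O ar) :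
    liftAction f.symm (liftAction f a) = a := by
  cases a; simp [liftAction, liftState_symm]

lemma succs_lift (f : O ≃ O) {s t : HLState P O ar} {a : GroundAction P O ar}
    (h : t ∈ succs s a) :
    liftState f t ∈ succs (liftState f s) (liftAction f a) := by
  obtain ⟨i, hi⟩ := h
  exact ⟨i, by simp [hi, liftState_union, liftState_diff, liftAction]⟩

lemma solvesWithin_pushforward_mp (f : O ≃ O) (π πF : Policy P O ar)
    (hpush : ∀ s : HLState P O ar, πF (liftState f s) = liftAction f '' π s)
    (s₀ G : HLState P O ar) (m : ℕ) (h : SolvesWithin π s₀ G m) :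
    SolvesWithin πF (liftState f s₀) (liftState f G) m := by
  intro s hs0 hstep
  obtain ⟨t, htm, hGt⟩ := h (fun t => liftState f.symm (s t))
    (by show liftState f.symm (s 0) = s₀; rw [hs0, liftState_symm])
    (by
      intro t ht hG
      have hst : liftState f (liftState f.symm (s t)) = s t := liftState_symm' f _
      have hG' : ¬ liftState f G ⊆ s t := by
        rw [← hst]; exact fun hc => hG ((liftState_subset_iff f _ _).1 hc)
      obtain ⟨a, ha, hsucc⟩ := hstep t ht hG'
      rw [← hst, hpush] at ha
      obtain ⟨b, hb, rfl⟩ := ha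
      refine ⟨b, hb, ?_⟩
      have := succs_lift f.symm hsucc
      rwa [← hst, liftState_symm, liftAction_symm_comp] at this)
  exact ⟨t, htm, by
    have := (liftState_subset_iff f G _).2 hGt
    rwa [liftState_symm' f (s t)] at this⟩

/-- Pushforward of policies along a renaming commutes with solving: if `π`
assigns applicable actions and `πF` is the pushforward policy, i.e.
`πF(F(s)) = {F(a) : a ∈ π(s)}` for every state `s`, then for every horizon
`m`, `π` solves `(s₀, G)` within `m` steps iff `πF` solves `(F(s₀), F(G))`
within `m` steps. -/
theorem solvesWithin_pushforward (f : O ≃ O) (π πF : Policy P O ar)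
    (hπ : ∀ s : HLState P O ar, ∀ a ∈ π s, Applicable a s)
    (hpush : ∀ s : HLState P O ar, πF (liftState f s) = liftAction f '' π s)
    (s₀ G : HLState P O ar) (m : ℕ) :
    SolvesWithin π s₀ G m ↔
      SolvesWithin πF (liftState f s₀) (liftState f G) m := by
  constructor
  · exact solvesWithin_pushforward_mp f π πF hpush s₀ G m
  · intro h
    have hpush' : ∀ s : HLState P O ar,
        π (liftState f.symm s) = liftAction f.symm '' πF s := by
      intro s
      have := hpush (liftState f.symm s)
      rw [liftState_symm'] at this
      simp only [this, Set.image_image, liftAction_symm_comp, Set.image_id']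
    have := solvesWithin_pushforward_mp f.symm πF π hpush'
      (liftState f s₀) (liftState f G) m h
    rwa [liftState_symm, liftState_symm] at this

end Bison
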